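/- Let W be a standard Brownian motion, and fix σ > 0 and c > 0. Then for almost every ω the following holds: for every family (Q^μ)_{μ∈ℝ} in which, for each μ ∈ ℝ, Q^μ is a solution of the one-armed Thompson sampling limit ODE driven by the path W(ω) with parameters (μ, σ, c), and with limit regret R(μ) = max(μ,0) − μ·Q^μ(1), one has lim_{μ→−∞} R(μ) = +∞ and liminf_{μ→+∞} R(μ) > 0. -/

import Mathlib

open MeasureTheory ProbabilityTheory Filter Set

/-- The standard normal distribution function `Φ`. -/
noncomputable def Phi (x : ℝ) : ℝ :=
  ∫ s in Set.Iic x, (Real.sqrt (2 * Real.pi))⁻¹ * Real.exp (-s ^ 2 / 2)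

namespace PhiAux

noncomputable def gpdf (s : ℝ) : ℝ := (Real.sqrt (2 * Real.pi))⁻¹ * Real.exp (-s ^ 2 / 2)

lemma Phi_eq (x : ℝ) : Phi x = ∫ s in Set.Iic x, gpdf s := rfl

lemma sqrt_two_pi_pos : 0 < Real.sqrt (2 * Real.pi) :=
  Real.sqrt_pos.2 (by positivity)

lemma gpdf_pos (s : ℝ) : 0 < gpdf s :=
  mul_pos (inv_pos.2 sqrt_two_pi_pos) (Real.exp_pos _)

lemma gpdf_integrable : Integrable gpdf := by
  have h : Integrable fun s : ℝ => Real.exp (-(1/2) * s ^ 2) :=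
    integrable_exp_neg_mul_sq (by norm_num)
  have : (fun s : ℝ => Real.exp (-s ^ 2 / 2)) = fun s : ℝ => Real.exp (-(1/2) * s ^ 2) := by
    funext s; ring_nf
  exact Integrable.const_mul (this ▸ h) _

lemma integral_gpdf : ∫ s, gpdf s = 1 := by
  have h : ∫ s : ℝ, Real.exp (-(1/2) * s ^ 2) = Real.sqrt (Real.pi / (1/2)) :=
    integral_gaussian (1/2)
  have h2 : (fun s : ℝ => Real.exp (-s ^ 2 / 2)) = fun s : ℝ => Real.exp (-(1/2) * s ^ 2) := by
    funext s; ring_nf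
  unfold gpdf
  calc ∫ s, (Real.sqrt (2 * Real.pi))⁻¹ * Real.exp (-s ^ 2 / 2)
      = (Real.sqrt (2 * Real.pi))⁻¹ * ∫ s, Real.exp (-s ^ 2 / 2) := by
        rw [integral_const_mul]
    _ = 1 := by
        rw [h2, h]
        rw [show Real.pi / (1/2) = 2 * Real.pi by ring]
        exact inv_mul_cancel₀ (ne_of_gt sqrt_two_pi_pos)

lemma Phi_sub_Phi {a b : ℝ} : Phi b - Phi a = ∫ s in a..b, gpdf s := by
  rw [Phi_eq, Phi_eq]
  exact intervalIntegral.integral_Iic_sub_Iic (gpdf_integrable.integrableOn)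
    (gpdf_integrable.integrableOn)

lemma Phi_mono : Monotone Phi := by
  intro a b hab
  have h := Phi_sub_Phi (a := a) (b := b)
  have : 0 ≤ ∫ s in a..b, gpdf s :=
    intervalIntegral.integral_nonneg hab fun s _ => (gpdf_pos s).le
  linarith

lemma Phi_pos (x : ℝ) : 0 < Phi x := by
  rw [Phi_eq]
  rw [setIntegral_pos_iff_support_of_nonneg_ae
    (Filter.Eventually.of_forall fun s => (gpdf_pos s).le) gpdf_integrable.integrableOn]
  have : Function.support gpdf = Set.univ := by
    ext s; simp [Function.mem_support, (gpdf_pos s).ne']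
  rw [this, Set.univ_inter]
  simp [Real.volume_Iic]

lemma one_sub_Phi (x : ℝ) : 1 - Phi x = ∫ s in Set.Ioi x, gpdf s := by
  have := intervalIntegral.integral_Iic_add_Ioi (b := x) (f := gpdf) gpdf_integrable.integrableOn
    gpdf_integrable.integrableOn
  rw [integral_gpdf] at this
  rw [Phi_eq]; linarith

lemma Phi_lt_one (x : ℝ) : Phi x < 1 := by
  have h := one_sub_Phi x
  have : 0 < ∫ s in Set.Ioi x, gpdf s := by
    rw [setIntegral_pos_iff_support_of_nonneg_ae
      (Filter.Eventually.of_forall fun s => (gpdf_pos s).le) gpdf_integrable.integrableOn]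
    have hs : Function.support gpdf = Set.univ := by
      ext s; simp [Function.mem_support, (gpdf_pos s).ne']
    rw [hs, Set.univ_inter]
    simp [Real.volume_Ioi]
  linarith

lemma Phi_le_one (x : ℝ) : Phi x ≤ 1 := (Phi_lt_one x).le

lemma Phi_nonneg (x : ℝ) : 0 ≤ Phi x := (Phi_pos x).le

lemma Phi_zero : Phi 0 = 1/2 := by
  have hsymm : (∫ s in Set.Iic (0:ℝ), gpdf s) = ∫ s in Set.Ioi (0:ℝ), gpdf s := by
    have : (∫ s in Set.Iic (0:ℝ), gpdf (-s)) = ∫ s in Set.Ioi (-(0:ℝ)), gpdf s :=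
      integral_comp_neg_Iic 0 gpdf
    simp only [neg_zero] at this
    rw [← this]
    congr 1; funext s; simp [gpdf]
  have := one_sub_Phi 0
  rw [← hsymm, ← Phi_eq] at this
  linarith

lemma Phi_continuous : Continuous Phi := by
  have hlip : LipschitzWith ⟨(Real.sqrt (2 * Real.pi))⁻¹, by positivity⟩ Phi := by
    apply LipschitzWith.of_dist_le_mul
    intro a b
    wlog hab : a ≤ b generalizing a b
    · rw [dist_comm, dist_comm a b]; exact this b a (le_of_not_ge hab)
    rw [Real.dist_eq, Real.dist_eq, abs_of_nonpos (by have := Phi_mono hab; linarith),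
      abs_of_nonpos (by linarith)]
    have h := Phi_sub_Phi (a := a) (b := b)
    have hle : ∫ s in a..b, gpdf s ≤ ∫ s in a..b, (Real.sqrt (2 * Real.pi))⁻¹ := by
      apply intervalIntegral.integral_mono_on hab
        (gpdf_integrable.intervalIntegrable) (intervalIntegrable_const)
      intro s _
      rw [gpdf]
      nth_rewrite 2 [← mul_one (Real.sqrt (2 * Real.pi))⁻¹]
      exact mul_le_mul_of_nonneg_left
        (by rw [← Real.exp_zero]; exact Real.exp_le_exp.2 (by nlinarith [sq_nonneg s])) (by positivity)
    rw [intervalIntegral.integral_const, smul_eq_mul] at hle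
    push_cast
    rw [mul_comm]
    change -(Phi a - Phi b) ≤ -(a - b) * (Real.sqrt (2 * Real.pi))⁻¹
    linarith
  exact hlip.continuous

lemma exp_bound {u : ℝ} (hu : 1 ≤ u) : ∫ s in Set.Ioi u, Real.exp (-s/2) = 2 * Real.exp (-u/2) := by
  have hderiv : ∀ x ∈ Set.Ioi u, HasDerivAt (fun s => -2 * Real.exp (-s/2)) (Real.exp (-x/2)) x := by
    intro x _
    have h1 : HasDerivAt (fun s : ℝ => -s/2) (-1/2) x := by
      simpa using ((hasDerivAt_id x).neg.div_const 2)
    have := (h1.exp).const_mul (-2 : ℝ)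
    exact this.congr_deriv (by ring)
  have hint : IntegrableOn (fun s => Real.exp (-s/2)) (Set.Ioi u) := by
    have := exp_neg_integrableOn_Ioi u (b := 1/2) (by norm_num)
    convert this using 1; funext s; ring_nf
  have htend : Tendsto (fun s => -2 * Real.exp (-s/2)) atTop (nhds 0) := by
    have : Tendsto (fun s : ℝ => -s/2) atTop atBot := by
      apply Filter.Tendsto.atBot_div_const (by norm_num)
      exact tendsto_neg_atBot_iff.2 tendsto_id
    have h2 := (Real.tendsto_exp_atBot.comp this).const_mul (-2 : ℝ)
    simpa using h2
  have := integral_Ioi_of_hasDerivAt_of_tendsto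
    (Continuous.continuousWithinAt (by continuity)) hderiv hint htend
  rw [this]; ring

lemma Phi_tail (u : ℝ) : 1 - Phi u ≤ Real.exp (-u/2) := by
  rcases le_or_gt u 0 with hu | hu
  · have : (1:ℝ) ≤ Real.exp (-u/2) := by
      rw [← Real.exp_zero]; exact Real.exp_le_exp.2 (by linarith)
    have := Phi_nonneg u; linarith
  rcases le_or_gt u 1 with hu1 | hu1
  · -- 1 - Phi u ≤ 1 - Phi 0 = 1/2 ≤ exp(-1/2) ≤ exp(-u/2)
    have h1 : Phi 0 ≤ Phi u := Phi_mono hu.le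
    rw [Phi_zero] at h1
    have h2 : (1:ℝ)/2 ≤ Real.exp (-(1:ℝ)/2) := by
      have := Real.add_one_le_exp (-(1:ℝ)/2); linarith
    have h3 : Real.exp (-(1:ℝ)/2) ≤ Real.exp (-u/2) := by
      apply Real.exp_le_exp.2; linarith
    linarith
  · -- u > 1
    have key : ∫ s in Set.Ioi u, gpdf s ≤ (Real.sqrt (2 * Real.pi))⁻¹ * (2 * Real.exp (-u/2)) := by
      rw [← exp_bound hu1.le, ← integral_const_mul]
      apply setIntegral_mono_on gpdf_integrable.integrableOn
      · have h := (exp_neg_integrableOn_Ioi u (b := 1/2) (by norm_num)).const_mul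
          ((Real.sqrt (2 * Real.pi))⁻¹)
        have heq : (fun s : ℝ => (Real.sqrt (2 * Real.pi))⁻¹ * Real.exp (-s/2))
            = fun s : ℝ => (Real.sqrt (2 * Real.pi))⁻¹ * Real.exp (-(1/2) * s) := by
          funext s; ring_nf
        rw [heq]; exact h
      · exact measurableSet_Ioi
      · intro s hs
        rw [gpdf]
        apply mul_le_mul_of_nonneg_left _ (by positivity)
        apply Real.exp_le_exp.2
        have hs1 : 1 ≤ s := le_trans hu1.le (le_of_lt hs)
        nlinarith
    rw [one_sub_Phi]
    calc ∫ s in Set.Ioi u, gpdf s ≤ (Real.sqrt (2 * Real.pi))⁻¹ * (2 * Real.exp (-u/2)) := key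
      _ ≤ Real.exp (-u/2) := by
          have h2 : (2:ℝ) ≤ Real.sqrt (2 * Real.pi) := by
            have h4 : (2:ℝ) = Real.sqrt 4 := by
              rw [show (4:ℝ) = 2^2 by norm_num, Real.sqrt_sq (by norm_num : (0:ℝ) ≤ 2)]
            calc (2:ℝ) = Real.sqrt 4 := h4
              _ ≤ Real.sqrt (2 * Real.pi) := Real.sqrt_le_sqrt (by nlinarith [Real.pi_gt_three])
          rw [inv_mul_le_iff₀ sqrt_two_pi_pos]
          exact mul_le_mul_of_nonneg_right h2 (Real.exp_nonneg _)

end PhiAux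


/-- `W` is a standard Brownian motion under `P`: continuous sample paths, `W₀ = 0`,
Gaussian increments `W_t - W_s ~ N(0, t - s)`, and independent increments. -/
def IsStdBM {Ω : Type*} [MeasurableSpace Ω] (P : Measure Ω) (W : ℝ → Ω → ℝ) : Prop :=
  (∀ ω, Continuous fun t => W t ω) ∧
  (∀ ω, W 0 ω = 0) ∧
  (∀ s t : ℝ, 0 ≤ s → s < t →
    Measure.map (fun ω => W t ω - W s ω) P = gaussianReal 0 (Real.toNNReal (t - s))) ∧
  (∀ (n : ℕ) (t : Fin (n + 1) → ℝ), (∀ i, 0 ≤ t i) → StrictMono t →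
    iIndepFun
      (fun i : Fin n => fun ω => W (t i.succ) ω - W (t i.castSucc) ω) P)

/-- A solution of the one-armed Thompson sampling limit ODE driven by `w`
with parameters `(μ, σ, c)`: a continuous nondecreasing `Q : [0,1] → ℝ` with `Q 0 = 0`,
`Q t > 0` on `(0,1]`, differentiable on `(0,1]` with
`Q'(t) = Φ((μ Q t + w (Q t)) / (σ √(Q t + σ² c)))`. -/
def IsOneArmSol (w : ℝ → ℝ) (μ σ c : ℝ) (Q : ℝ → ℝ) : Prop :=
  ContinuousOn Q (Set.Icc 0 1) ∧ MonotoneOn Q (Set.Icc 0 1) ∧ Q 0 = 0 ∧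
  (∀ t ∈ Set.Ioc (0:ℝ) 1, 0 < Q t) ∧
  (∀ t ∈ Set.Ioc (0:ℝ) 1,
    HasDerivWithinAt Q
      (Phi ((μ * Q t + w (Q t)) / (σ * Real.sqrt (Q t + σ ^ 2 * c)))) (Set.Icc 0 1) t)

namespace OneArmAux

open PhiAux


variable {w : ℝ → ℝ} {μ σ c : ℝ} {Q : ℝ → ℝ}

lemma sol_nonneg (hQ : IsOneArmSol w μ σ c Q) {t : ℝ} (ht : t ∈ Set.Icc (0:ℝ) 1) :
    0 ≤ Q t := by
  rcases eq_or_lt_of_le ht.1 with h | h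
  · rw [← h, hQ.2.2.1]
  · exact (hQ.2.2.2.1 t ⟨h, ht.2⟩).le

lemma sol_continuousOn_g (hw : Continuous w) (hσ : 0 < σ) (hc : 0 < c)
    (hQ : IsOneArmSol w μ σ c Q) :
    ContinuousOn (fun s => Phi ((μ * Q s + w (Q s)) / (σ * Real.sqrt (Q s + σ ^ 2 * c))))
      (Set.Icc 0 1) := by
  have hcQ := hQ.1
  have hnum : ContinuousOn (fun s => μ * Q s + w (Q s)) (Set.Icc 0 1) :=
    (continuousOn_const.mul hcQ).add (hw.comp_continuousOn hcQ)
  have hden : ContinuousOn (fun s => σ * Real.sqrt (Q s + σ ^ 2 * c)) (Set.Icc 0 1) :=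
    continuousOn_const.mul (Real.continuous_sqrt.comp_continuousOn (hcQ.add continuousOn_const))
  have hden0 : ∀ s ∈ Set.Icc (0:ℝ) 1, σ * Real.sqrt (Q s + σ ^ 2 * c) ≠ 0 := by
    intro s hs
    have h1 : 0 ≤ Q s := sol_nonneg hQ hs
    have h2 : 0 < Q s + σ ^ 2 * c := by positivity
    exact (mul_pos hσ (Real.sqrt_pos.2 h2)).ne'
  exact Phi_continuous.comp_continuousOn (hnum.div hden hden0)

lemma sol_ftc (hw : Continuous w) (hσ : 0 < σ) (hc : 0 < c)
    (hQ : IsOneArmSol w μ σ c Q) {t : ℝ} (ht : t ∈ Set.Icc (0:ℝ) 1) :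
    Q t = ∫ s in (0:ℝ)..t,
      Phi ((μ * Q s + w (Q s)) / (σ * Real.sqrt (Q s + σ ^ 2 * c))) := by
  rcases eq_or_lt_of_le ht.1 with h | h
  · rw [← h, hQ.2.2.1, intervalIntegral.integral_same]
  · have hsub : Set.Icc (0:ℝ) t ⊆ Set.Icc 0 1 := Set.Icc_subset_Icc le_rfl ht.2
    have hint : IntervalIntegrable
        (fun s => Phi ((μ * Q s + w (Q s)) / (σ * Real.sqrt (Q s + σ ^ 2 * c)))) volume 0 t := by
      apply ContinuousOn.intervalIntegrable
      rw [Set.uIcc_of_le ht.1]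
      exact (sol_continuousOn_g hw hσ hc hQ).mono hsub
    have := intervalIntegral.integral_eq_sub_of_hasDeriv_right_of_le ht.1
      (hQ.1.mono hsub)
      (fun x hx => by
        have hx1 : x ∈ Set.Ioc (0:ℝ) 1 := ⟨hx.1, le_trans hx.2.le ht.2⟩
        have hd := hQ.2.2.2.2 x hx1
        have hmem : Set.Icc (0:ℝ) 1 ∈ nhds x := Icc_mem_nhds hx.1 (lt_of_lt_of_le hx.2 ht.2)
        exact ((hd.hasDerivAt hmem).hasDerivWithinAt))
      hint
    rw [this, hQ.2.2.1, sub_zero]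

lemma sol_le_self (hw : Continuous w) (hσ : 0 < σ) (hc : 0 < c)
    (hQ : IsOneArmSol w μ σ c Q) {t : ℝ} (ht : t ∈ Set.Icc (0:ℝ) 1) :
    Q t ≤ t := by
  rw [sol_ftc hw hσ hc hQ ht]
  have hint : IntervalIntegrable
      (fun s => Phi ((μ * Q s + w (Q s)) / (σ * Real.sqrt (Q s + σ ^ 2 * c)))) volume 0 t := by
    apply ContinuousOn.intervalIntegrable
    rw [Set.uIcc_of_le ht.1]
    exact (sol_continuousOn_g hw hσ hc hQ).mono (Set.Icc_subset_Icc le_rfl ht.2)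
  calc (∫ s in (0:ℝ)..t, Phi ((μ * Q s + w (Q s)) / (σ * Real.sqrt (Q s + σ ^ 2 * c))))
      ≤ ∫ _ in (0:ℝ)..t, (1:ℝ) :=
        intervalIntegral.integral_mono_on ht.1 hint intervalIntegrable_const
          (fun x _ => Phi_le_one _)
    _ = t := by simp

-- arithmetic helpers
lemma aux_lb_neg {N num den d0 : ℝ} (h0 : 0 < d0) (hdd : d0 ≤ den) (hN : N ≤ 0)
    (hNn : N ≤ num) : N / d0 ≤ num / den := by
  rw [div_le_div_iff₀ h0 (lt_of_lt_of_le h0 hdd)]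
  have h1 : N * den ≤ N * d0 := mul_le_mul_of_nonpos_left hdd hN
  have h2 : N * d0 ≤ num * d0 := mul_le_mul_of_nonneg_right hNn h0.le
  linarith

lemma aux_lb_pos {x num den D : ℝ} (hx : 0 ≤ x) (hxn : x ≤ num) (h0 : 0 < den)
    (hdD : den ≤ D) : x / D ≤ num / den := by
  have hD : 0 < D := lt_of_lt_of_le h0 hdD
  rw [div_le_div_iff₀ hD h0]
  have h1 : x * den ≤ x * D := mul_le_mul_of_nonneg_left hdD hx
  have h2 : x * D ≤ num * D := mul_le_mul_of_nonneg_right hxn hD.le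
  linarith

lemma aux_ub {x num den d0 : ℝ} (hx : 0 ≤ x) (hnx : num ≤ x) (h0 : 0 < d0)
    (hdd : d0 ≤ den) : num / den ≤ x / d0 := by
  rw [div_le_div_iff₀ (lt_of_lt_of_le h0 hdd) h0]
  have h1 : num * d0 ≤ x * d0 := mul_le_mul_of_nonneg_right hnx h0.le
  have h2 : x * d0 ≤ x * den := mul_le_mul_of_nonneg_left hdd hx
  linarith

end OneArmAux

open PhiAux OneArmAux

theorem oneArm_core (w : ℝ → ℝ) (hw : Continuous w) (hw0 : w 0 = 0)
    (σ c : ℝ) (hσ : 0 < σ) (hc : 0 < c) (Q : ℝ → ℝ → ℝ)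
    (hQ : ∀ μ : ℝ, IsOneArmSol w μ σ c (Q μ)) :
    Tendsto (fun μ : ℝ => max μ 0 - μ * Q μ 1) atBot atTop ∧
      0 < Filter.liminf (fun μ : ℝ => max μ 0 - μ * Q μ 1) atTop := by
  obtain ⟨C, hC⟩ := isCompact_Icc.exists_bound_of_continuousOn
    (hw.continuousOn : ContinuousOn w (Set.Icc (0:ℝ) 1))
  have hC0 : 0 ≤ C := by
    have := hC 0 ⟨le_rfl, zero_le_one⟩
    rw [hw0] at this; simpa using this
  have hCabs : ∀ x ∈ Set.Icc (0:ℝ) 1, -C ≤ w x ∧ w x ≤ C := by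
    intro x hx
    have := hC x hx
    rw [Real.norm_eq_abs, abs_le] at this
    exact this
  set d0 := σ * Real.sqrt (σ ^ 2 * c) with hd0def
  have hd0 : 0 < d0 := mul_pos hσ (Real.sqrt_pos.2 (by positivity))
  set D := σ * Real.sqrt (1 + σ ^ 2 * c) with hDdef
  have hD : 0 < D := mul_pos hσ (Real.sqrt_pos.2 (by positivity))
  set g : ℝ → ℝ → ℝ :=
    fun μ s => Phi ((μ * Q μ s + w (Q μ s)) / (σ * Real.sqrt (Q μ s + σ ^ 2 * c))) with hgdef
  have hgc : ∀ μ, ContinuousOn (g μ) (Set.Icc 0 1) :=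
    fun μ => sol_continuousOn_g hw hσ hc (hQ μ)
  have hftc : ∀ μ : ℝ, ∀ t ∈ Set.Icc (0:ℝ) 1, Q μ t = ∫ s in (0:ℝ)..t, g μ s :=
    fun μ t ht => sol_ftc hw hσ hc (hQ μ) ht
  have hQnn : ∀ μ : ℝ, ∀ t ∈ Set.Icc (0:ℝ) 1, 0 ≤ Q μ t :=
    fun μ t ht => sol_nonneg (hQ μ) ht
  have hQle : ∀ μ : ℝ, ∀ t ∈ Set.Icc (0:ℝ) 1, Q μ t ≤ t :=
    fun μ t ht => sol_le_self hw hσ hc (hQ μ) ht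
  have hQmem : ∀ μ : ℝ, ∀ t ∈ Set.Icc (0:ℝ) 1, Q μ t ∈ Set.Icc (0:ℝ) 1 :=
    fun μ t ht => ⟨hQnn μ t ht, le_trans (hQle μ t ht) ht.2⟩
  have hden_lb : ∀ μ : ℝ, ∀ t ∈ Set.Icc (0:ℝ) 1, d0 ≤ σ * Real.sqrt (Q μ t + σ ^ 2 * c) := by
    intro μ t ht
    apply mul_le_mul_of_nonneg_left _ hσ.le
    exact Real.sqrt_le_sqrt (by linarith [hQnn μ t ht])
  have hden_ub : ∀ μ : ℝ, ∀ t ∈ Set.Icc (0:ℝ) 1, σ * Real.sqrt (Q μ t + σ ^ 2 * c) ≤ D := by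
    intro μ t ht
    apply mul_le_mul_of_nonneg_left _ hσ.le
    exact Real.sqrt_le_sqrt (by linarith [(hQmem μ t ht).2])
  have hden_pos : ∀ μ : ℝ, ∀ t ∈ Set.Icc (0:ℝ) 1, 0 < σ * Real.sqrt (Q μ t + σ ^ 2 * c) :=
    fun μ t ht => lt_of_lt_of_le hd0 (hden_lb μ t ht)
  have hgint : ∀ μ : ℝ, ∀ a b : ℝ, a ∈ Set.Icc (0:ℝ) 1 → b ∈ Set.Icc (0:ℝ) 1 →
      IntervalIntegrable (g μ) volume a b := by
    intro μ a b ha hb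
    exact ((hgc μ).mono (Set.uIcc_subset_Icc ha hb)).intervalIntegrable
  constructor
  · -- divergence at -∞
    rw [tendsto_atTop]
    intro b
    set b' := max b 0 with hb'def
    have hb'0 : 0 ≤ b' := le_max_right _ _
    set δ := Phi (-(b' + C) / d0) with hδdef
    have hδpos : 0 < δ := Phi_pos _
    rw [eventually_atBot]
    refine ⟨min (-(b'/δ)) 0, fun μ hμ => ?_⟩
    have hμ0 : μ ≤ 0 := le_trans hμ (min_le_right _ _)
    have hμ1 : μ ≤ -(b'/δ) := le_trans hμ (min_le_left _ _)
    rw [max_eq_right hμ0, zero_sub]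
    have h1mem : (1:ℝ) ∈ Set.Icc (0:ℝ) 1 := ⟨zero_le_one, le_rfl⟩
    have hqnn : 0 ≤ Q μ 1 := hQnn μ 1 h1mem
    rcases le_or_gt (μ * Q μ 1) (-b') with hcase | hcase
    · have : b ≤ b' := le_max_left _ _; linarith
    · have hglb : ∀ t ∈ Set.Icc (0:ℝ) 1, δ ≤ g μ t := by
        intro t ht
        apply Phi_mono
        apply aux_lb_neg hd0 (hden_lb μ t ht) (by linarith)
        have hQt : Q μ t ≤ Q μ 1 := (hQ μ).2.1 ht h1mem ht.2
        have h1 : μ * Q μ 1 ≤ μ * Q μ t := mul_le_mul_of_nonpos_left hQt hμ0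
        have h2 : -C ≤ w (Q μ t) := (hCabs _ (hQmem μ t ht)).1
        linarith
      have hq_ge : δ ≤ Q μ 1 := by
        rw [hftc μ 1 h1mem]
        have hmono := intervalIntegral.integral_mono_on zero_le_one
          intervalIntegrable_const (hgint μ 0 1 ⟨le_rfl, zero_le_one⟩ h1mem) hglb
        simpa using hmono
      have h3 : b'/δ ≤ -μ := by linarith
      have h4 : b' ≤ -μ * δ := by
        rw [div_le_iff₀ hδpos] at h3; linarith
      have h5 : -μ * δ ≤ -μ * Q μ 1 := mul_le_mul_of_nonneg_left hq_ge (by linarith)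
      have h6 : b ≤ b' := le_max_left _ _
      nlinarith
  · -- positive liminf at +∞
    set ρ := Phi (-C / d0) with hρdef
    have hρpos : 0 < ρ := Phi_pos _
    set A := (1 + C) / d0 with hAdef
    set c₀ := 1 - Phi A with hc₀def
    have hc₀pos : 0 < c₀ := by have := Phi_lt_one A; rw [hc₀def]; linarith
    set B := 2 * D * Real.exp (C / (2*D)) / ρ with hBdef
    have key : ∀ μ : ℝ, 1 ≤ μ →
        c₀ ≤ max μ 0 - μ * Q μ 1 ∧ max μ 0 - μ * Q μ 1 ≤ B := by
      intro μ hμ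
      have hμ0 : (0:ℝ) < μ := lt_of_lt_of_le one_pos hμ
      have hmax : max μ 0 = μ := max_eq_left hμ0.le
      have h1mem : (1:ℝ) ∈ Set.Icc (0:ℝ) 1 := ⟨zero_le_one, le_rfl⟩
      have hglbρ : ∀ t ∈ Set.Icc (0:ℝ) 1, ρ ≤ g μ t := by
        intro t ht
        apply Phi_mono
        apply aux_lb_neg hd0 (hden_lb μ t ht) (by simp [neg_nonpos]; linarith)
        have h1 : 0 ≤ μ * Q μ t := mul_nonneg hμ0.le (hQnn μ t ht)
        have h2 : -C ≤ w (Q μ t) := (hCabs _ (hQmem μ t ht)).1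
        linarith
      have hQρ : ∀ t ∈ Set.Icc (0:ℝ) 1, ρ * t ≤ Q μ t := by
        intro t ht
        rw [hftc μ t ht]
        have hmono := intervalIntegral.integral_mono_on ht.1
          intervalIntegrable_const (hgint μ 0 t ⟨le_rfl, zero_le_one⟩ ht)
          (fun x hx => hglbρ x ⟨hx.1, le_trans hx.2 ht.2⟩)
        simpa [mul_comm] using hmono
      have hinv0 : 0 ≤ 1/μ := by positivity
      have hinv1 : 1/μ ≤ 1 := by rw [div_le_one hμ0]; exact hμ
      have hinvmem : (1/μ) ∈ Set.Icc (0:ℝ) 1 := ⟨hinv0, hinv1⟩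
      constructor
      · -- lower bound c₀
        have hsplit : Q μ 1 = (∫ s in (0:ℝ)..(1/μ), g μ s) + ∫ s in (1/μ)..1, g μ s := by
          rw [hftc μ 1 h1mem,
            ← intervalIntegral.integral_add_adjacent_intervals
              (hgint μ 0 (1/μ) ⟨le_rfl, zero_le_one⟩ hinvmem) (hgint μ (1/μ) 1 hinvmem h1mem)]
        have hptA : ∀ x ∈ Set.Icc (0:ℝ) (1/μ), g μ x ≤ Phi A := by
          intro x hx
          have hxmem : x ∈ Set.Icc (0:ℝ) 1 := ⟨hx.1, le_trans hx.2 hinv1⟩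
          apply Phi_mono
          apply aux_ub (by linarith : (0:ℝ) ≤ 1 + C) _ hd0 (hden_lb μ x hxmem)
          have h1 : μ * Q μ x ≤ μ * x := mul_le_mul_of_nonneg_left (hQle μ x hxmem) hμ0.le
          have h2 : μ * x ≤ 1 := by
            have := mul_le_mul_of_nonneg_left hx.2 hμ0.le
            rw [mul_one_div, div_self hμ0.ne'] at this; exact this
          have h3 : w (Q μ x) ≤ C := (hCabs _ (hQmem μ x hxmem)).2
          linarith
        have hub1 : (∫ s in (0:ℝ)..(1/μ), g μ s) ≤ (1/μ) * Phi A := by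
          have hmono := intervalIntegral.integral_mono_on hinv0
            (hgint μ 0 (1/μ) ⟨le_rfl, zero_le_one⟩ hinvmem) intervalIntegrable_const hptA
          simpa [mul_comm] using hmono
        have hub2 : (∫ s in (1/μ)..1, g μ s) ≤ 1 - 1/μ := by
          have hmono := intervalIntegral.integral_mono_on hinv1
            (hgint μ (1/μ) 1 hinvmem h1mem) intervalIntegrable_const
            (fun x hx => Phi_le_one _)
          simpa using hmono
        rw [hmax]
        have h6 : μ * Q μ 1 ≤ μ * ((1/μ) * Phi A + (1 - 1/μ)) := by
          apply mul_le_mul_of_nonneg_left _ hμ0.le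
          linarith
        have h7 : μ * ((1/μ) * Phi A + (1 - 1/μ)) = Phi A + μ - 1 := by
          field_simp; ring
        rw [hc₀def]; linarith
      · -- upper bound B
        rw [hmax]
        set β := μ * ρ / (2*D) with hβdef
        have hβpos : 0 < β := by positivity
        have hpt : ∀ t ∈ Set.Icc (0:ℝ) 1,
            1 - Real.exp (C/(2*D)) * Real.exp (-(β * t)) ≤ g μ t := by
          intro t ht
          have hE : Real.exp (C/(2*D)) * Real.exp (-(β*t)) = Real.exp (-(μ*ρ*t - C)/(2*D)) := by
            rw [← Real.exp_add]; congr 1; rw [hβdef]; field_simp; ring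
          rw [hE]
          rcases le_or_gt (μ*ρ*t - C) 0 with hx0 | hx0
          · have hgeo : (1:ℝ) ≤ Real.exp (-(μ*ρ*t - C)/(2*D)) := by
              rw [← Real.exp_zero]
              apply Real.exp_le_exp.2
              apply div_nonneg (by linarith) (by positivity)
            have := Phi_nonneg ((μ * Q μ t + w (Q μ t)) / (σ * Real.sqrt (Q μ t + σ ^ 2 * c)))
            simp only [hgdef]
            linarith
          · have hnum : μ*ρ*t - C ≤ μ * Q μ t + w (Q μ t) := by
              have h1 : μ * (ρ*t) ≤ μ * Q μ t := mul_le_mul_of_nonneg_left (hQρ t ht) hμ0.le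
              have h2 : -C ≤ w (Q μ t) := (hCabs _ (hQmem μ t ht)).1
              nlinarith
            have harg : (μ*ρ*t - C) / D ≤
                (μ * Q μ t + w (Q μ t)) / (σ * Real.sqrt (Q μ t + σ ^ 2 * c)) :=
              aux_lb_pos hx0.le hnum (hden_pos μ t ht) (hden_ub μ t ht)
            have h3 := Phi_tail ((μ * Q μ t + w (Q μ t)) / (σ * Real.sqrt (Q μ t + σ ^ 2 * c)))
            have h4 : Real.exp (-((μ * Q μ t + w (Q μ t)) /
                (σ * Real.sqrt (Q μ t + σ ^ 2 * c)))/2) ≤ Real.exp (-(μ*ρ*t - C)/(2*D)) := by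
              apply Real.exp_le_exp.2
              have hhalf : -(μ*ρ*t - C)/(2*D) = -((μ*ρ*t - C)/D)/2 := by ring
              rw [hhalf]
              linarith
            simp only [hgdef]
            linarith
        have hEexact : (∫ t in (0:ℝ)..1, Real.exp (-(β * t))) = (1 - Real.exp (-β))/β := by
          have hderiv : ∀ t ∈ Set.uIcc (0:ℝ) 1,
              HasDerivAt (fun u => -(1/β) * Real.exp (-(β*u))) (Real.exp (-(β*t))) t := by
            intro t _
            have h1 : HasDerivAt (fun u : ℝ => -(β*u)) (-β) t := by
              exact (((hasDerivAt_id t).const_mul β).neg).congr_deriv (by ring)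
            have := (h1.exp).const_mul (-(1/β))
            exact this.congr_deriv (by rw [mul_comm (Real.exp _) (-β), ← mul_assoc, neg_mul_neg, one_div_mul_cancel hβpos.ne', one_mul])
          have hcont1 : Continuous fun t : ℝ => Real.exp (-(β * t)) :=
            Real.continuous_exp.comp (continuous_const.mul continuous_id).neg
          rw [intervalIntegral.integral_eq_sub_of_hasDerivAt hderiv
            (hcont1.intervalIntegrable _ _)]
          field_simp
          simp only [mul_zero, neg_zero, Real.exp_zero]
          ring
        have hqlb : 1 - Real.exp (C/(2*D)) * ((1 - Real.exp (-β))/β) ≤ Q μ 1 := by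
          rw [hftc μ 1 h1mem]
          have hcont1 : Continuous fun t : ℝ => Real.exp (-(β * t)) :=
            Real.continuous_exp.comp (continuous_const.mul continuous_id).neg
          have hcontE : Continuous fun t : ℝ =>
              1 - Real.exp (C/(2*D)) * Real.exp (-(β * t)) :=
            continuous_const.sub (continuous_const.mul hcont1)
          have hmono := intervalIntegral.integral_mono_on zero_le_one
            (hcontE.intervalIntegrable _ _) (hgint μ 0 1 ⟨le_rfl, zero_le_one⟩ h1mem) hpt
          have hcalc : (∫ t in (0:ℝ)..1, (1 - Real.exp (C/(2*D)) * Real.exp (-(β * t))))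
              = 1 - Real.exp (C/(2*D)) * ((1 - Real.exp (-β))/β) := by
            rw [intervalIntegral.integral_sub (f := fun _ => (1:ℝ)) (g := fun t => Real.exp (C/(2*D)) * Real.exp (-(β * t))) intervalIntegrable_const
              ((continuous_const.mul hcont1).intervalIntegrable _ _),
              intervalIntegral.integral_const_mul, hEexact]
            simp
          rw [hcalc] at hmono
          exact hmono
        have h8 : μ * (1 - Q μ 1) ≤ μ * (Real.exp (C/(2*D)) * ((1 - Real.exp (-β))/β)) := by
          apply mul_le_mul_of_nonneg_left _ hμ0.le
          linarith
        have h9 : μ * (Real.exp (C/(2*D)) * ((1 - Real.exp (-β))/β)) ≤ B := by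
          rw [hBdef, hβdef, le_div_iff₀ hρpos]
          have hexp1 : 1 - Real.exp (-(μ * ρ / (2*D))) ≤ 1 := by
            have := Real.exp_pos (-(μ * ρ / (2*D))); linarith
          have hfs : μ * (Real.exp (C/(2*D)) * ((1 - Real.exp (-(μ * ρ / (2*D))))/(μ * ρ / (2*D)))) * ρ
              = 2 * D * Real.exp (C/(2*D)) * (1 - Real.exp (-(μ * ρ / (2*D)))) := by
            field_simp [hμ0.ne', hρpos.ne', hD.ne']
          rw [hfs]
          have h10 : (0:ℝ) ≤ 2 * D * Real.exp (C/(2*D)) := by positivity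
          exact mul_le_of_le_one_right h10 hexp1
        have hexpand : μ * (1 - Q μ 1) = μ - μ * Q μ 1 := by ring
        linarith
    have hib : IsBoundedUnder (· ≤ ·) atTop (fun μ : ℝ => max μ 0 - μ * Q μ 1) := by
      refine ⟨B, ?_⟩
      rw [eventually_map]
      filter_upwards [eventually_ge_atTop 1] with μ hμ using (key μ hμ).2
    have hcb : IsCoboundedUnder (· ≥ ·) atTop (fun μ : ℝ => max μ 0 - μ * Q μ 1) :=
      hib.isCoboundedUnder_flip
    refine lt_of_lt_of_le hc₀pos (Filter.le_liminf_of_le hcb ?_)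
    filter_upwards [eventually_ge_atTop 1] with μ hμ using (key μ hμ).1


/-- Smoothed one-armed Thompson sampling (`c > 0`): almost surely, the limit regret
`R(μ) = max(μ,0) - μ Q^μ(1)` diverges as `μ → -∞` and has positive liminf as `μ → +∞`. -/
theorem smoothed_one_arm_regret {Ω : Type*} [MeasurableSpace Ω] (P : Measure Ω)
    (W : ℝ → Ω → ℝ) (hW : IsStdBM P W) (σ c : ℝ) (hσ : 0 < σ) (hc : 0 < c) :
    ∀ᵐ ω ∂P, ∀ Q : ℝ → ℝ → ℝ,
      (∀ μ : ℝ, IsOneArmSol (fun x => W x ω) μ σ c (Q μ)) →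
      Tendsto (fun μ : ℝ => max μ 0 - μ * Q μ 1) atBot atTop ∧
      0 < Filter.liminf (fun μ : ℝ => max μ 0 - μ * Q μ 1) atTop := by
  refine MeasureTheory.ae_of_all P fun ω Qf hsol => ?_
  exact oneArm_core (fun x => W x ω) (hW.1 ω) (hW.2.1 ω) σ c hσ hc Qf hsol
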